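/- arXiv:2006.09576 — 2 statements merged into one kernel-verified Lean document; each statement's English description precedes it below -/
import Mathlib

section
/- Let L be a subdirectly irreducible pk-algebra and C(x) = (x ∧ x') ∨ (x ∧ x')*. Then C(a) ∧ C(a)' ≤ C(b) holds for all a, b ∈ L if and only if Body(L) has at most one element. -/
/-- A pseudocomplemented De Morgan algebra (pm-algebra): a bounded distributive
lattice with a De Morgan involution `dm` and a pseudocomplement `pc`. -/
class PMAlgebra (L : Type*) extends DistribLattice L, BoundedOrder L where
  dm : L → L
  pc : L → L
  dm_dm : ∀ a : L, dm (dm a) = a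
  dm_inf : ∀ a b : L, dm (a ⊓ b) = dm a ⊔ dm b
  pc_iff : ∀ a b : L, a ⊓ b = ⊥ ↔ b ≤ pc a

namespace PMAlgebra

variable {L : Type*} [PMAlgebra L]

/-- A congruence of a pm-algebra. -/
def IsCongruence (θ : L → L → Prop) : Prop :=
  Equivalence θ ∧
  (∀ a b c d : L, θ a b → θ c d → θ (a ⊓ c) (b ⊓ d)) ∧
  (∀ a b c d : L, θ a b → θ c d → θ (a ⊔ c) (b ⊔ d)) ∧
  (∀ a b : L, θ a b → θ (dm a) (dm b)) ∧
  (∀ a b : L, θ a b → θ (pc a) (pc b))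

/-- `L` is simple: it has more than one element and its only congruences are
equality and the total relation. -/
def Simple (L : Type*) [PMAlgebra L] : Prop :=
  Nontrivial L ∧ ∀ θ : L → L → Prop, IsCongruence θ →
    θ = (fun a b => a = b) ∨ θ = (fun _ _ => True)

/-- `L` is subdirectly irreducible: there is a congruence `μ ≠ Eq` contained in
every congruence different from equality. -/
def SubdirectlyIrreducible (L : Type*) [PMAlgebra L] : Prop :=
  ∃ μ : L → L → Prop, IsCongruence μ ∧ μ ≠ (fun a b => a = b) ∧
    ∀ θ : L → L → Prop, IsCongruence θ → θ ≠ (fun a b => a = b) →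
      ∀ a b : L, μ a b → θ a b

/-- A prime filter of the underlying lattice of `L`. -/
def IsPrimeFilter (P : Set L) : Prop :=
  P.Nonempty ∧ P ≠ Set.univ ∧
  (∀ a b : L, a ∈ P → a ≤ b → b ∈ P) ∧
  (∀ a b : L, a ∈ P → b ∈ P → a ⊓ b ∈ P) ∧
  (∀ a b : L, a ⊔ b ∈ P → a ∈ P ∨ b ∈ P)

/-- The Birula–Rasiowa transformation. -/
def phi (P : Set L) : Set L := {a : L | dm a ∉ P}

/-- `P` is a maximal prime filter. -/
def IsMaximalPF (P : Set L) : Prop :=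
  IsPrimeFilter P ∧ ∀ Q : Set L, IsPrimeFilter Q → P ⊆ Q → Q = P

/-- `P` is a minimal prime filter. -/
def IsMinimalPF (P : Set L) : Prop :=
  IsPrimeFilter P ∧ ∀ Q : Set L, IsPrimeFilter Q → Q ⊆ P → Q = P

/-- The body of `L`: prime filters that are neither maximal nor minimal. -/
def body (L : Type*) [PMAlgebra L] : Set (Set L) :=
  {P : Set L | IsPrimeFilter P ∧ ¬ IsMaximalPF P ∧ ¬ IsMinimalPF P}

/-- The prime filter space of `L` is φ-connected. -/
def PhiConnected (L : Type*) [PMAlgebra L] : Prop :=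
  ∀ S : Set (Set L), S ⊆ {P : Set L | IsPrimeFilter P} → S.Nonempty →
    (∀ P Q : Set L, P ∈ S → IsPrimeFilter Q → P ⊆ Q → Q ∈ S) →
    (∀ P Q : Set L, P ∈ S → IsPrimeFilter Q → Q ⊆ P → Q ∈ S) →
    (∀ P : Set L, P ∈ S → phi P ∈ S) →
    S = {P : Set L | IsPrimeFilter P}

/-- The Kleene identity. -/
def Kleene (L : Type*) [PMAlgebra L] : Prop :=
  ∀ a b : L, a ⊓ dm a ≤ b ⊔ dm b

/-- The term `C(x) = (x ∧ x') ∨ (x ∧ x')*`. -/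
def C (x : L) : L := (x ⊓ dm x) ⊔ pc (x ⊓ dm x)

/-- The term `T(x) = C(x) ∧ C(x)'`. -/
def T (x : L) : L := C x ⊓ dm (C x)

end PMAlgebra

namespace PMAlgebra

variable {L : Type*} [PMAlgebra L]

-- basic dm lemmas
theorem dm_anti {a b : L} (h : a ≤ b) : dm b ≤ dm a := by
  have h2 : dm (a ⊓ b) = dm a ⊔ dm b := dm_inf a b
  rw [inf_eq_left.mpr h] at h2
  rw [h2]; exact le_sup_right

theorem dm_sup' (a b : L) : dm (a ⊔ b) = dm a ⊓ dm b := by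
  have h := dm_inf (dm a) (dm b)
  rw [dm_dm, dm_dm] at h
  calc dm (a ⊔ b) = dm (dm (dm a ⊓ dm b)) := by rw [h]
  _ = dm a ⊓ dm b := dm_dm _

theorem dm_bot' : dm (⊥ : L) = ⊤ := by
  have h : dm (dm (⊤ : L)) ≤ dm ⊥ := dm_anti bot_le
  rw [dm_dm] at h
  exact le_antisymm le_top h

theorem dm_top' : dm (⊤ : L) = ⊥ := by
  have h := dm_bot' (L := L)
  rw [← h, dm_dm]

theorem inf_pc (a : L) : a ⊓ pc a = ⊥ := (pc_iff a (pc a)).mpr le_rfl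

-- prime filter lemmas
theorem IsPrimeFilter.mem_of_le {P : Set L} (hP : IsPrimeFilter P) {a b : L}
    (ha : a ∈ P) (h : a ≤ b) : b ∈ P := hP.2.2.1 a b ha h

theorem IsPrimeFilter.inf_mem {P : Set L} (hP : IsPrimeFilter P) {a b : L}
    (ha : a ∈ P) (hb : b ∈ P) : a ⊓ b ∈ P := hP.2.2.2.1 a b ha hb

theorem IsPrimeFilter.sup_cases {P : Set L} (hP : IsPrimeFilter P) {a b : L}
    (h : a ⊔ b ∈ P) : a ∈ P ∨ b ∈ P := hP.2.2.2.2 a b h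

theorem IsPrimeFilter.bot_not_mem {P : Set L} (hP : IsPrimeFilter P) : (⊥ : L) ∉ P := by
  intro h
  exact hP.2.1 (Set.eq_univ_of_forall fun x => hP.mem_of_le h bot_le)

theorem IsPrimeFilter.mem_inf_iff {P : Set L} (hP : IsPrimeFilter P) {a b : L} :
    a ⊓ b ∈ P ↔ a ∈ P ∧ b ∈ P :=
  ⟨fun h => ⟨hP.mem_of_le h inf_le_left, hP.mem_of_le h inf_le_right⟩,
   fun h => hP.inf_mem h.1 h.2⟩

theorem IsPrimeFilter.mem_sup_iff {P : Set L} (hP : IsPrimeFilter P) {a b : L} :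
    a ⊔ b ∈ P ↔ a ∈ P ∨ b ∈ P :=
  ⟨hP.sup_cases, fun h => h.elim (fun h => hP.mem_of_le h le_sup_left)
    (fun h => hP.mem_of_le h le_sup_right)⟩

-- phi lemmas
theorem mem_phi_iff {P : Set L} {a : L} : a ∈ phi P ↔ dm a ∉ P := Iff.rfl

theorem dm_mem_iff {P : Set L} {a : L} : dm a ∈ P ↔ a ∉ phi P := by
  rw [mem_phi_iff, not_not]

theorem phi_phi (P : Set L) : phi (phi P) = P := by
  ext a
  rw [mem_phi_iff, mem_phi_iff, dm_dm, not_not]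

theorem phi_anti {P Q : Set L} (h : P ⊆ Q) : phi Q ⊆ phi P :=
  fun _ ha hb => ha (h hb)

theorem phi_prime {P : Set L} (hP : IsPrimeFilter P) : IsPrimeFilter (phi P) := by
  refine ⟨⟨⊤, ?_⟩, ?_, ?_, ?_, ?_⟩
  · rw [mem_phi_iff, dm_top']
    exact hP.bot_not_mem
  · intro h
    have : (⊥ : L) ∈ phi P := h ▸ Set.mem_univ ⊥
    rw [mem_phi_iff, dm_bot'] at this
    obtain ⟨x, hx⟩ := hP.1
    exact this (hP.mem_of_le hx le_top)
  · intro a b ha hab hb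
    exact ha (hP.mem_of_le hb (dm_anti hab))
  · intro a b ha hb h
    rw [dm_inf a b] at h
    rcases hP.sup_cases h with h1 | h1
    · exact ha h1
    · exact hb h1
  · intro a b h
    rw [mem_phi_iff, dm_sup'] at h
    by_contra hc
    push_neg at hc
    obtain ⟨h1, h2⟩ := hc
    exact h (hP.inf_mem (dm_mem_iff.mpr h1) (dm_mem_iff.mpr h2))



/-- Birkhoff style prime filter extension avoiding a principal ideal. -/
theorem exists_prime_avoid (F : Set L) (hFne : F.Nonempty)
    (hFup : ∀ a b : L, a ∈ F → a ≤ b → b ∈ F)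
    (hFinf : ∀ a b : L, a ∈ F → b ∈ F → a ⊓ b ∈ F)
    (v : L) (hv : ∀ f ∈ F, ¬ f ≤ v) :
    ∃ P : Set L, IsPrimeFilter P ∧ F ⊆ P ∧ ∀ p ∈ P, ¬ p ≤ v := by
  set S : Set (Set L) := {G | F ⊆ G ∧ (∀ a b : L, a ∈ G → a ≤ b → b ∈ G) ∧
      (∀ a b : L, a ∈ G → b ∈ G → a ⊓ b ∈ G) ∧ ∀ g ∈ G, ¬ g ≤ v} with hS
  have hFS : F ∈ S := ⟨subset_rfl, hFup, hFinf, hv⟩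
  have hchain : ∀ c ⊆ S, IsChain (· ⊆ ·) c → c.Nonempty → ∃ ub ∈ S, ∀ s ∈ c, s ⊆ ub := by
    rintro c hcS hch ⟨G0, hG0⟩
    refine ⟨⋃₀ c, ⟨?_, ?_, ?_, ?_⟩, fun s hs => Set.subset_sUnion_of_mem hs⟩
    · exact (hcS hG0).1.trans (Set.subset_sUnion_of_mem hG0)
    · rintro a b ⟨G, hG, haG⟩ hab
      exact ⟨G, hG, (hcS hG).2.1 a b haG hab⟩
    · rintro a b ⟨G1, hG1, ha⟩ ⟨G2, hG2, hb⟩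
      rcases hch.total hG1 hG2 with h | h
      · exact ⟨G2, hG2, (hcS hG2).2.2.1 a b (h ha) hb⟩
      · exact ⟨G1, hG1, (hcS hG1).2.2.1 a b ha (h hb)⟩
    · rintro g ⟨G, hG, hgG⟩
      exact (hcS hG).2.2.2 g hgG
  obtain ⟨M, hFM, hMS, hMmax⟩ := zorn_subset_nonempty S hchain F hFS
  have hMup := hMS.2.1
  have hMinf := hMS.2.2.1
  have hMav := hMS.2.2.2
  have hMF : F ⊆ M := hMS.1
  have key : ∀ x : L, x ∉ M → ∃ g ∈ M, g ⊓ x ≤ v := by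
    intro x hx
    by_contra hno
    push_neg at hno
    set Gx : Set L := {t | ∃ g ∈ M, g ⊓ x ≤ t} with hGx
    have hGxS : Gx ∈ S := by
      refine ⟨?_, ?_, ?_, ?_⟩
      · intro f hf
        exact ⟨f, hMF hf, inf_le_left⟩
      · rintro p q ⟨g, hg, hgp⟩ hpq
        exact ⟨g, hg, hgp.trans hpq⟩
      · rintro p q ⟨g1, hg1, h1⟩ ⟨g2, hg2, h2⟩
        refine ⟨g1 ⊓ g2, hMinf _ _ hg1 hg2, le_inf ?_ ?_⟩
        · exact le_trans (inf_le_inf_right x inf_le_left) h1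
        · exact le_trans (inf_le_inf_right x inf_le_right) h2
      · rintro t ⟨g, hg, hgt⟩ htv
        exact hno g hg (hgt.trans htv)
    have hsub : M ⊆ Gx := fun t ht => ⟨t, ht, inf_le_left⟩
    have heqM : Gx ⊆ M := hMmax hGxS hsub
    obtain ⟨f, hf⟩ := hFne
    exact hx (heqM ⟨f, hMF hf, inf_le_right⟩)
  have hprime : ∀ a b : L, a ⊔ b ∈ M → a ∈ M ∨ b ∈ M := by
    intro a b hab
    by_contra hcon
    push_neg at hcon
    obtain ⟨g1, hg1, h1⟩ := key a hcon.1
    obtain ⟨g2, hg2, h2⟩ := key b hcon.2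
    have hg : g1 ⊓ g2 ⊓ (a ⊔ b) ∈ M := hMinf _ _ (hMinf _ _ hg1 hg2) hab
    have hle : g1 ⊓ g2 ⊓ (a ⊔ b) ≤ v := by
      rw [inf_sup_left]
      refine sup_le ?_ ?_
      · exact le_trans (inf_le_inf_right a inf_le_left) h1
      · exact le_trans (inf_le_inf_right b inf_le_right) h2
    exact hMav _ hg hle
  have hvM : v ∉ M := fun h => hMav v h le_rfl
  refine ⟨M, ⟨hFne.mono hMF, ?_, hMup, hMinf, hprime⟩, hMF, hMav⟩
  intro h
  exact hvM (h ▸ Set.mem_univ v)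

theorem separation {a b : L} (h : ¬ a ≤ b) :
    ∃ P : Set L, IsPrimeFilter P ∧ a ∈ P ∧ b ∉ P := by
  obtain ⟨P, hP, hsub, hav⟩ := exists_prime_avoid {t : L | a ≤ t} ⟨a, le_rfl⟩
    (fun x y hx hxy => le_trans hx hxy) (fun x y hx hy => le_inf hx hy) b
    (fun f hf hfb => h (le_trans hf hfb))
  exact ⟨P, hP, hsub le_rfl, fun hb => hav b hb le_rfl⟩

theorem eq_of_forall_prime {a b : L}
    (h : ∀ P : Set L, IsPrimeFilter P → (a ∈ P ↔ b ∈ P)) : a = b := by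
  refine le_antisymm ?_ ?_
  · by_contra hc
    obtain ⟨P, hP, ha, hb⟩ := separation hc
    exact hb ((h P hP).mp ha)
  · by_contra hc
    obtain ⟨P, hP, ha, hb⟩ := separation hc
    exact hb ((h P hP).mpr ha)

theorem exists_max_prime {P : Set L} (hP : IsPrimeFilter P) :
    ∃ M : Set L, IsMaximalPF M ∧ P ⊆ M := by
  set S : Set (Set L) := {Q | IsPrimeFilter Q ∧ P ⊆ Q} with hS
  have hchain : ∀ c ⊆ S, IsChain (· ⊆ ·) c → c.Nonempty → ∃ ub ∈ S, ∀ s ∈ c, s ⊆ ub := by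
    rintro c hcS hch ⟨G0, hG0⟩
    refine ⟨⋃₀ c, ⟨⟨?_, ?_, ?_, ?_, ?_⟩, ?_⟩, fun s hs => Set.subset_sUnion_of_mem hs⟩
    · obtain ⟨x, hx⟩ := (hcS hG0).1.1
      exact ⟨x, G0, hG0, hx⟩
    · intro h
      have hb : (⊥ : L) ∈ ⋃₀ c := h ▸ Set.mem_univ ⊥
      obtain ⟨G, hG, hbG⟩ := hb
      exact (hcS hG).1.bot_not_mem hbG
    · rintro x y ⟨G, hG, hxG⟩ hxy
      exact ⟨G, hG, (hcS hG).1.mem_of_le hxG hxy⟩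
    · rintro x y ⟨G1, hG1, hx⟩ ⟨G2, hG2, hy⟩
      rcases hch.total hG1 hG2 with h | h
      · exact ⟨G2, hG2, (hcS hG2).1.inf_mem (h hx) hy⟩
      · exact ⟨G1, hG1, (hcS hG1).1.inf_mem hx (h hy)⟩
    · rintro x y ⟨G, hG, hxy⟩
      rcases (hcS hG).1.sup_cases hxy with h | h
      · exact Or.inl ⟨G, hG, h⟩
      · exact Or.inr ⟨G, hG, h⟩
    · exact (hcS hG0).2.trans (Set.subset_sUnion_of_mem hG0)
  obtain ⟨M, hPM, hMS, hMmax⟩ := zorn_subset_nonempty S hchain P ⟨hP, subset_rfl⟩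
  refine ⟨M, ⟨hMS.1, ?_⟩, hMS.2⟩
  intro Q hQ hMQ
  exact (hMmax ⟨hQ, hMS.2.trans hMQ⟩ hMQ).antisymm hMQ

theorem pc_not_mem {P : Set L} (hP : IsPrimeFilter P) {u : L} (hpc : pc u ∉ P) :
    ∃ M : Set L, IsMaximalPF M ∧ P ⊆ M ∧ u ∈ M := by
  set F : Set L := {t | ∃ r ∈ P, r ⊓ u ≤ t} with hF
  obtain ⟨r0, hr0⟩ := hP.1
  have hFne : F.Nonempty := ⟨u, r0, hr0, inf_le_right⟩
  have hFup : ∀ a b : L, a ∈ F → a ≤ b → b ∈ F := by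
    rintro a b ⟨r, hr, hru⟩ hab
    exact ⟨r, hr, hru.trans hab⟩
  have hFinf : ∀ a b : L, a ∈ F → b ∈ F → a ⊓ b ∈ F := by
    rintro a b ⟨r1, hr1, h1⟩ ⟨r2, hr2, h2⟩
    refine ⟨r1 ⊓ r2, hP.inf_mem hr1 hr2, le_inf ?_ ?_⟩
    · exact le_trans (inf_le_inf_right u inf_le_left) h1
    · exact le_trans (inf_le_inf_right u inf_le_right) h2
  have hav : ∀ f ∈ F, ¬ f ≤ (⊥ : L) := by
    rintro f ⟨r, hr, hru⟩ hfb
    have : r ⊓ u = ⊥ := le_bot_iff.mp (hru.trans hfb)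
    rw [inf_comm] at this
    exact hpc (hP.mem_of_le hr ((pc_iff u r).mp this))
  obtain ⟨G, hG, hFG, _⟩ := exists_prime_avoid F hFne hFup hFinf ⊥ hav
  obtain ⟨M, hM, hGM⟩ := exists_max_prime hG
  refine ⟨M, hM, ?_, hGM (hFG ⟨r0, hr0, inf_le_right⟩)⟩
  · intro r hr
    exact hGM (hFG ⟨r, hr, inf_le_left⟩)

theorem pc_mem_iff {P : Set L} (hP : IsPrimeFilter P) {u : L} :
    pc u ∈ P ↔ ∀ M : Set L, IsMaximalPF M → P ⊆ M → u ∉ M := by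
  constructor
  · intro h M hM hPM huM
    have hb : u ⊓ pc u ∈ M := hM.1.inf_mem huM (hPM h)
    rw [inf_pc] at hb
    exact hM.1.bot_not_mem hb
  · intro h
    by_contra hpc
    obtain ⟨M, hM, hPM, huM⟩ := pc_not_mem hP hpc
    exact h M hM hPM huM



theorem prime_comparable (hk : Kleene L) {P : Set L} (hP : IsPrimeFilter P) :
    phi P ⊆ P ∨ P ⊆ phi P := by
  by_contra h
  push_neg at h
  obtain ⟨z, hzφ, hzP⟩ := Set.not_subset.mp h.1
  obtain ⟨x, hxP, hxφ⟩ := Set.not_subset.mp h.2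
  have hdmx : dm x ∈ P := dm_mem_iff.mpr hxφ
  have hy : x ⊓ dm x ∈ P := hP.inf_mem hxP hdmx
  have hw : z ⊔ dm z ∈ P := hP.mem_of_le hy (hk x z)
  rcases hP.sup_cases hw with h1 | h1
  · exact hzP h1
  · exact hzφ h1

theorem phi_min_of_max {M : Set L} (hM : IsMaximalPF M) : IsMinimalPF (phi M) := by
  refine ⟨phi_prime hM.1, ?_⟩
  intro Q hQ hQsub
  have h1 : phi (phi M) ⊆ phi Q := phi_anti hQsub
  rw [phi_phi] at h1
  have h2 : phi Q = M := hM.2 (phi Q) (phi_prime hQ) h1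
  rw [← phi_phi (P := Q), h2]

theorem phi_max_of_min {N : Set L} (hN : IsMinimalPF N) : IsMaximalPF (phi N) := by
  refine ⟨phi_prime hN.1, ?_⟩
  intro Q hQ hQsub
  have h1 : phi Q ⊆ phi (phi N) := phi_anti hQsub
  rw [phi_phi] at h1
  have h2 : phi Q = N := hN.2 (phi Q) (phi_prime hQ) h1
  rw [← phi_phi (P := Q), h2]

theorem max_pc_mem {M : Set L} (hM : IsMaximalPF M) {u : L} :
    pc u ∈ M ↔ u ∉ M := by
  rw [pc_mem_iff hM.1]
  constructor
  · intro h
    exact h M hM subset_rfl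
  · intro h M' hM' hsub
    rw [hM.2 M' hM'.1 hsub]
    exact h

theorem C_mem_max {M : Set L} (hM : IsMaximalPF M) (b : L) : C b ∈ M := by
  by_cases h : b ⊓ dm b ∈ M
  · exact hM.1.mem_of_le h le_sup_left
  · exact hM.1.mem_of_le ((max_pc_mem hM).mpr h) le_sup_right

theorem phi_subset_of_max (hk : Kleene L) {M : Set L} (hM : IsMaximalPF M) :
    phi M ⊆ M := by
  rcases prime_comparable hk hM.1 with h | h
  · exact h
  · rw [hM.2 (phi M) (phi_prime hM.1) h]

/-- Key structure lemma: if the identity `T a ≤ C b` holds and `phi R ⊊ R`,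
then `R` is maximal. -/
theorem max_of_phi_ssub (hk : Kleene L) (heq : ∀ a b : L, T a ≤ C b)
    {R : Set L} (hR : IsPrimeFilter R) (hsub : phi R ⊆ R) (hne : phi R ≠ R) :
    IsMaximalPF R := by
  by_contra hnmax
  have hnsub : ¬ R ⊆ phi R := fun h => hne (Set.Subset.antisymm hsub h)
  obtain ⟨p, hpR, hpφ⟩ := Set.not_subset.mp hnsub
  have hdmp : dm p ∈ R := dm_mem_iff.mpr hpφ
  have hy : p ⊓ dm p ∈ R := hR.inf_mem hpR hdmp
  have hpcφ : pc (p ⊓ dm p) ∉ phi R := by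
    intro h
    have hb : (p ⊓ dm p) ⊓ pc (p ⊓ dm p) ∈ R := hR.inf_mem hy (hsub h)
    rw [inf_pc] at hb
    exact hR.bot_not_mem hb
  have hdmpc : dm (pc (p ⊓ dm p)) ∈ R := dm_mem_iff.mpr hpcφ
  have hCp : C p ∈ R := hR.mem_of_le hy le_sup_left
  have hdmCp : dm (C p) ∈ R := by
    have hdmy : dm (p ⊓ dm p) ∈ R := by
      rw [dm_inf, dm_dm]
      exact hR.mem_of_le hpR le_sup_right
    have hEq : dm (C p) = dm (p ⊓ dm p) ⊓ dm (pc (p ⊓ dm p)) := by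
      rw [C, dm_sup']
    rw [hEq]
    exact hR.inf_mem hdmy hdmpc
  have hTp : T p ∈ R := hR.inf_mem hCp hdmCp
  -- get a maximal prime strictly above R
  have hex : ∃ Q : Set L, IsPrimeFilter Q ∧ R ⊆ Q ∧ Q ≠ R := by
    by_contra hc
    push_neg at hc
    exact hnmax ⟨hR, fun Q hQ hRQ => hc Q hQ hRQ⟩
  obtain ⟨Q, hQ, hRQ, hQne⟩ := hex
  obtain ⟨M, hM, hQM⟩ := exists_max_prime hQ
  have hRM : R ⊆ M := hRQ.trans hQM
  have hRneM : R ≠ M := by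
    intro h
    exact hQne (Set.Subset.antisymm (h ▸ hQM) hRQ)
  have hMR : M ⊆ R := by
    intro m hm
    by_cases hdm : dm m ∈ M
    · have hCm : C m ∈ R := hR.mem_of_le hTp (heq p m)
      rcases hR.sup_cases hCm with h1 | h2
      · exact hR.mem_of_le h1 inf_le_left
      · exfalso
        have hym : m ⊓ dm m ∈ M := hM.1.inf_mem hm hdm
        have hb : (m ⊓ dm m) ⊓ pc (m ⊓ dm m) ∈ M := hM.1.inf_mem hym (hRM h2)
        rw [inf_pc] at hb
        exact hM.1.bot_not_mem hb
    · have hmφ : m ∈ phi M := hdm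
      exact hsub (phi_anti hRM hmφ)
  exact hRneM (Set.Subset.antisymm hRM hMR)

theorem body_fixed (hk : Kleene L) (heq : ∀ a b : L, T a ≤ C b)
    {P : Set L} (hP : P ∈ body L) : phi P = P := by
  obtain ⟨hPpr, hnmax, hnmin⟩ := hP
  rcases prime_comparable hk hPpr with h | h
  · by_contra hne
    exact hnmax (max_of_phi_ssub hk heq hPpr h hne)
  · by_contra hne
    have h2 : phi (phi P) ⊆ phi P := by rw [phi_phi]; exact h
    have hne2 : phi (phi P) ≠ phi P := by
      rw [phi_phi]
      exact fun hh => hne hh.symm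
    have hmax := max_of_phi_ssub hk heq (phi_prime hPpr) h2 hne2
    have := phi_min_of_max hmax
    rw [phi_phi] at this
    exact hnmin this



/-- For each body element `P` we construct a pair `α < β` whose "difference"
prime filters are all non-maximal fixed points of `phi`, with `P` among them. -/
theorem build_pair (hk : Kleene L) (heq : ∀ a b : L, T a ≤ C b)
    {P : Set L} (hP : P ∈ body L) :
    ∃ α β : L, α ≤ β ∧ β ∈ P ∧ α ∉ P ∧
      ∀ R : Set L, IsPrimeFilter R → β ∈ R → α ∉ R →
        ¬ IsMaximalPF R ∧ phi R = R := by
  obtain ⟨hPpr, hnmax, hnmin⟩ := hP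
  have hfix : phi P = P := body_fixed hk heq ⟨hPpr, hnmax, hnmin⟩
  -- a maximal prime filter above P
  have hex : ∃ Q : Set L, IsPrimeFilter Q ∧ P ⊆ Q ∧ Q ≠ P := by
    by_contra hc
    push_neg at hc
    exact hnmax ⟨hPpr, fun Q hQ hPQ => hc Q hQ hPQ⟩
  obtain ⟨Q, hQ, hPQ, _⟩ := hex
  obtain ⟨M, hM, hQM⟩ := exists_max_prime hQ
  have hPM : P ⊆ M := hPQ.trans hQM
  -- choose x ∈ P \ phi M
  have hnsub : ¬ P ⊆ phi M := by
    intro hsubm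
    have hmin := phi_min_of_max hM
    have : P = phi M := hmin.2 P hPpr hsubm
    exact hnmin (this ▸ hmin)
  obtain ⟨x, hxP, hxφM⟩ := Set.not_subset.mp hnsub
  set y : L := x ⊓ dm x with hy
  set g : L := pc y with hg
  set α : L := (y ⊔ (g ⊓ x)) ⊔ dm x with hα
  set β : L := α ⊔ dm (C x) with hβ
  have hdmxM : dm x ∈ M := dm_mem_iff.mpr hxφM
  have hyM : y ∈ M := hM.1.inf_mem (hPM hxP) hdmxM
  have hdmxP : dm x ∉ P := by
    have hxφP : x ∈ phi P := hfix.symm ▸ hxP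
    exact hxφP
  have hyP : y ∉ P := fun h => hdmxP (hPpr.mem_of_le h inf_le_right)
  have hgP : g ∉ P := by
    intro hgmem
    exact (pc_mem_iff hPpr).mp hgmem M hM hPM hyM
  have hαP : α ∉ P := by
    intro h
    rcases hPpr.sup_cases h with h1 | h2
    · rcases hPpr.sup_cases h1 with h3 | h4
      · exact hyP h3
      · exact hgP (hPpr.mem_of_le h4 inf_le_left)
    · exact hdmxP h2
  have hdmCxP : dm (C x) ∈ P := by
    have h1 : dm y ∈ P := by
      rw [hy, dm_inf, dm_dm]
      exact hPpr.mem_of_le hxP le_sup_right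
    have h2 : dm g ∈ P := by
      rw [← hfix] at hgP
      exact dm_mem_iff.mpr hgP
    have hEq : dm (C x) = dm y ⊓ dm g := by rw [C, dm_sup']
    rw [hEq]
    exact hPpr.inf_mem h1 h2
  have hβP : β ∈ P := hPpr.mem_of_le hdmCxP le_sup_right
  refine ⟨α, β, le_sup_left, hβP, hαP, ?_⟩
  intro R hR hβR hαR
  -- unpack the difference conditions
  have hdmxR : dm x ∉ R := fun h => hαR (hR.mem_of_le h le_sup_right)
  have hyR : y ∉ R := fun h => hαR (hR.mem_of_le h (le_sup_left.trans le_sup_left))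
  have hgxR : g ⊓ x ∉ R := fun h => hαR (hR.mem_of_le h (le_sup_right.trans le_sup_left))
  have hdmCxR : dm (C x) ∈ R := by
    rcases hR.sup_cases hβR with h1 | h2
    · exact absurd h1 hαR
    · exact h2
  have hnmaxR : ¬ IsMaximalPF R := by
    intro hRmax
    have hφsub : phi R ⊆ R := phi_subset_of_max hk hRmax
    have hxR : x ∈ R := hφsub hdmxR
    have hgR : g ∈ R := (max_pc_mem hRmax).mpr hyR
    exact hgxR (hR.inf_mem hgR hxR)
  have hnminR : ¬ IsMinimalPF R := by
    intro hRmin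
    have hφmax := phi_max_of_min hRmin
    have hCφ : C x ∈ phi R := C_mem_max hφmax x
    exact hCφ hdmCxR
  exact ⟨hnmaxR, body_fixed hk heq ⟨hR, hnmaxR, hnminR⟩⟩

/-- The relation "agree on all prime filters outside `E`" is a congruence,
provided the members of `E` are non-maximal `phi`-fixed prime filters. -/
theorem theta_congr (E : Set L → Prop)
    (hE : ∀ R : Set L, IsPrimeFilter R → E R → ¬ IsMaximalPF R ∧ phi R = R) :
    IsCongruence (fun a b : L => ∀ R : Set L, IsPrimeFilter R → ¬ E R → (a ∈ R ↔ b ∈ R)) := by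
  refine ⟨⟨fun a R _ _ => Iff.rfl, fun h R hR hER => (h R hR hER).symm,
      fun h1 h2 R hR hER => (h1 R hR hER).trans (h2 R hR hER)⟩, ?_, ?_, ?_, ?_⟩
  · intro a b c d hab hcd R hR hER
    rw [hR.mem_inf_iff, hR.mem_inf_iff]
    exact and_congr (hab R hR hER) (hcd R hR hER)
  · intro a b c d hab hcd R hR hER
    rw [hR.mem_sup_iff, hR.mem_sup_iff]
    exact or_congr (hab R hR hER) (hcd R hR hER)
  · intro a b hab R hR hER
    have hφpr : IsPrimeFilter (phi R) := phi_prime hR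
    have hφE : ¬ E (phi R) := by
      intro hEφ
      have h2 := (hE _ hφpr hEφ).2
      rw [phi_phi] at h2
      rw [h2] at hER
      exact hER hEφ
    have h := hab (phi R) hφpr hφE
    rw [dm_mem_iff, dm_mem_iff]
    exact not_congr h
  · intro a b hab R hR hER
    rw [pc_mem_iff hR, pc_mem_iff hR]
    constructor
    · intro h M hM hRM hbM
      exact h M hM hRM ((hab M hM.1 (fun hEM => (hE M hM.1 hEM).1 hM)).mpr hbM)
    · intro h M hM hRM haM
      exact h M hM hRM ((hab M hM.1 (fun hEM => (hE M hM.1 hEM).1 hM)).mp haM)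

/-- Core contradiction: two body elements separated by an element `s`
contradict subdirect irreducibility (given the identity). -/
theorem contra_core (hk : Kleene L) (hsi : SubdirectlyIrreducible L)
    (heq : ∀ a b : L, T a ≤ C b) {P₁ P₂ : Set L}
    (hP₁ : P₁ ∈ body L) (hP₂ : P₂ ∈ body L) (s : L)
    (hs₂ : s ∈ P₂) (hs₁ : s ∉ P₁) : False := by
  obtain ⟨α₁, β₁, hαβ₁, hβP₁, hαP₁, hD₁⟩ := build_pair hk heq hP₁
  obtain ⟨α₂, β₂, hαβ₂, hβP₂, hαP₂, hD₂⟩ := build_pair hk heq hP₂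
  set E₁ : Set L → Prop := fun R => β₁ ∈ R ∧ α₁ ∉ R ∧ s ∉ R with hE₁def
  set E₂ : Set L → Prop := fun R => β₂ ∈ R ∧ α₂ ∉ R ∧ s ∈ R with hE₂def
  set θ₁ : L → L → Prop :=
    fun a b => ∀ R : Set L, IsPrimeFilter R → ¬ E₁ R → (a ∈ R ↔ b ∈ R) with hθ₁def
  set θ₂ : L → L → Prop :=
    fun a b => ∀ R : Set L, IsPrimeFilter R → ¬ E₂ R → (a ∈ R ↔ b ∈ R) with hθ₂def
  have hθ₁c : IsCongruence θ₁ :=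
    theta_congr E₁ (fun R hR hER => hD₁ R hR hER.1 hER.2.1)
  have hθ₂c : IsCongruence θ₂ :=
    theta_congr E₂ (fun R hR hER => hD₂ R hR hER.1 hER.2.1)
  set u₁ : L := α₁ ⊔ (β₁ ⊓ s) with hu₁def
  set u₂ : L := α₂ ⊔ (β₂ ⊓ s) with hu₂def
  -- θ₁ relates u₁ and β₁
  have hθ₁w : θ₁ u₁ β₁ := by
    intro R hR hER
    constructor
    · intro h
      exact hR.mem_of_le h (sup_le hαβ₁ inf_le_left)
    · intro hβR
      by_cases hαR : α₁ ∈ R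
      · exact hR.mem_of_le hαR le_sup_left
      · by_cases hsR : s ∈ R
        · exact hR.mem_of_le (hR.inf_mem hβR hsR) le_sup_right
        · exact absurd ⟨hβR, hαR, hsR⟩ hER
  have hu₁ne : u₁ ≠ β₁ := by
    intro h
    have : u₁ ∈ P₁ := h ▸ hβP₁
    rcases (hP₁.1).sup_cases this with h1 | h2
    · exact hαP₁ h1
    · exact hs₁ (hP₁.1.mem_of_le h2 inf_le_right)
  have hθ₂w : θ₂ α₂ u₂ := by
    intro R hR hER
    constructor
    · intro h
      exact hR.mem_of_le h le_sup_left
    · intro hu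
      rcases hR.sup_cases hu with h1 | h2
      · exact h1
      · have hβR : β₂ ∈ R := hR.mem_of_le h2 inf_le_left
        have hsR : s ∈ R := hR.mem_of_le h2 inf_le_right
        by_cases hαR : α₂ ∈ R
        · exact hαR
        · exact absurd ⟨hβR, hαR, hsR⟩ hER
  have hu₂ne : α₂ ≠ u₂ := by
    intro h
    have hu : u₂ ∈ P₂ := hP₂.1.mem_of_le (hP₂.1.inf_mem hβP₂ hs₂) le_sup_right
    rw [← h] at hu
    exact hαP₂ hu
  have hθ₁ne : θ₁ ≠ (fun a b : L => a = b) := by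
    intro h
    rw [h] at hθ₁w
    exact hu₁ne hθ₁w
  have hθ₂ne : θ₂ ≠ (fun a b : L => a = b) := by
    intro h
    rw [h] at hθ₂w
    exact hu₂ne hθ₂w
  obtain ⟨μ, hμc, hμne, hμmin⟩ := hsi
  have hcd : ∃ c d : L, μ c d ∧ c ≠ d := by
    by_contra hc
    push_neg at hc
    apply hμne
    funext a b
    apply propext
    exact ⟨fun h => hc a b h, fun h => h ▸ hμc.1.refl a⟩
  obtain ⟨c, d, hμcd, hcdne⟩ := hcd
  have h1 : θ₁ c d := hμmin θ₁ hθ₁c hθ₁ne c d hμcd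
  have h2 : θ₂ c d := hμmin θ₂ hθ₂c hθ₂ne c d hμcd
  apply hcdne
  apply eq_of_forall_prime
  intro R hR
  by_cases hsR : s ∈ R
  · exact h1 R hR (fun hE => hE.2.2 hsR)
  · exact h2 R hR (fun hE => hsR hE.2.2)



theorem easy_dir (hk : Kleene L) (hb : (body L).Subsingleton) :
    ∀ a b : L, C a ⊓ dm (C a) ≤ C b := by
  intro a b
  by_contra hle
  obtain ⟨P, hP, hTP, hCbP⟩ := separation hle
  have hCa : C a ∈ P := hP.mem_of_le hTP inf_le_left
  have hdmCa : dm (C a) ∈ P := hP.mem_of_le hTP inf_le_right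
  have hCaφ : C a ∉ phi P := dm_mem_iff.mp hdmCa
  have hφsub : phi P ⊆ P := by
    rcases prime_comparable hk hP with h | h
    · exact h
    · exact absurd (h hCa) hCaφ
  have hφne : phi P ≠ P := fun h => hCaφ (h.symm ▸ hCa)
  have hybP : b ⊓ dm b ∉ P := fun h => hCbP (hP.mem_of_le h le_sup_left)
  have hpcP : pc (b ⊓ dm b) ∉ P := fun h => hCbP (hP.mem_of_le h le_sup_right)
  obtain ⟨M, hM, hPM, hybM⟩ := pc_not_mem hP hpcP
  have hPneM : P ≠ M := fun h => hybP (h ▸ hybM)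
  have hPbody : P ∈ body L := by
    refine ⟨hP, ?_, ?_⟩
    · intro hmax
      exact hPneM (hmax.2 M hM.1 hPM).symm
    · intro hmin
      exact hφne (hmin.2 (phi P) (phi_prime hP) hφsub)
  have hφbody : phi P ∈ body L := by
    refine ⟨phi_prime hP, ?_, ?_⟩
    · intro hmax
      exact hφne (hmax.2 P hP hφsub).symm
    · intro hmin
      have h1 : phi M ⊆ phi P := phi_anti hPM
      have h2 := hmin.2 (phi M) (phi_prime hM.1) h1
      have h3 : M = P := by
        rw [← phi_phi (P := M), h2, phi_phi]
      exact hPneM h3.symm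
  exact hφne (hb hφbody hPbody)

theorem main_thm (hk : Kleene L) (hsi : SubdirectlyIrreducible L) :
    (∀ a b : L, C a ⊓ dm (C a) ≤ C b) ↔ (body L).Subsingleton := by
  constructor
  · intro heq
    have heq' : ∀ a b : L, T a ≤ C b := heq
    intro P hP Q hQ
    by_contra hne
    have hex : ∃ s : L, (s ∈ P ∧ s ∉ Q) ∨ (s ∈ Q ∧ s ∉ P) := by
      by_contra hc
      push_neg at hc
      apply hne
      ext t
      exact ⟨fun ht => (hc t).1 ht, fun ht => (hc t).2 ht⟩
    obtain ⟨s, hs⟩ := hex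
    rcases hs with ⟨hsP, hsQ⟩ | ⟨hsQ, hsP⟩
    · exact contra_core hk hsi heq' hQ hP s hsP hsQ
    · exact contra_core hk hsi heq' hP hQ s hsQ hsP
  · intro hb
    exact easy_dir hk hb


end PMAlgebra

open PMAlgebra

/-- In a subdirectly irreducible pk-algebra, `C(a) ⊓ C(a)' ≤ C(b)` holds for
all `a, b` iff the body has at most one element. -/
theorem C_inf_dm_C_le_C_iff_body_subsingleton {L : Type*} [PMAlgebra L]
    (hk : Kleene L) (hsi : SubdirectlyIrreducible L) :
    (∀ a b : L, C a ⊓ dm (C a) ≤ C b) ↔ (body L).Subsingleton := by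
  exact main_thm hk hsi
end

section
/- Let L be a subdirectly irreducible pk-algebra satisfying a* ≤ C(b) ∨ T(a)* for all a, b ∈ L, and let d be its least dense element. Then the interval [d, d'] = {a ∈ L : d ≤ a and a ≤ d'} has at most three elements. -/
open PMAlgebra

section Aux

variable {L : Type*} [PMAlgebra L]

lemma my_dm_le_dm {a b : L} (h : a ≤ b) : dm b ≤ dm a := by
  have h2 : dm (a ⊓ b) = dm a ⊔ dm b := dm_inf a b
  rw [inf_eq_left.mpr h] at h2
  rw [h2]; exact le_sup_right

lemma my_dm_sup (a b : L) : dm (a ⊔ b) = dm a ⊓ dm b := by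
  have h := dm_inf (dm a) (dm b)
  rw [dm_dm, dm_dm] at h
  rw [← h, dm_dm]

lemma my_inf_pc (a : L) : a ⊓ pc a = ⊥ := (pc_iff a (pc a)).mpr le_rfl

lemma my_pc_le_pc {a b : L} (h : a ≤ b) : pc b ≤ pc a := by
  apply (pc_iff a (pc b)).mp
  have : a ⊓ pc b ≤ b ⊓ pc b := inf_le_inf_right _ h
  rw [my_inf_pc] at this
  exact le_bot_iff.mp this

lemma my_pc_inf_dense {e : L} (he : pc e = ⊥) (x : L) : pc (x ⊓ e) = pc x := by
  apply le_antisymm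
  · apply (pc_iff x (pc (x ⊓ e))).mp
    have h1 : (x ⊓ e) ⊓ pc (x ⊓ e) = ⊥ := my_inf_pc _
    have h2 : e ⊓ (x ⊓ pc (x ⊓ e)) = ⊥ := by rw [← h1]; ac_rfl
    have h3 : x ⊓ pc (x ⊓ e) ≤ pc e := (pc_iff e _).mp h2
    rw [he] at h3
    exact le_bot_iff.mp h3
  · exact my_pc_le_pc inf_le_left

lemma my_pc_sup (a b : L) : pc (a ⊔ b) = pc a ⊓ pc b := by
  apply le_antisymm
  · exact le_inf (my_pc_le_pc le_sup_left) (my_pc_le_pc le_sup_right)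
  · apply (pc_iff _ _).mp
    rw [inf_sup_right]
    have h1 : a ⊓ (pc a ⊓ pc b) = ⊥ := by
      have : a ⊓ (pc a ⊓ pc b) ≤ a ⊓ pc a := inf_le_inf_left _ inf_le_left
      rw [my_inf_pc] at this; exact le_bot_iff.mp this
    have h2 : b ⊓ (pc a ⊓ pc b) = ⊥ := by
      have : b ⊓ (pc a ⊓ pc b) ≤ b ⊓ pc b := inf_le_inf_left _ inf_le_right
      rw [my_inf_pc] at this; exact le_bot_iff.mp this
    rw [h1, h2, sup_idem]

lemma my_pc_inf_congr_le {x y u v : L} (hx : pc x = pc y) (hu : pc u = pc v) :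
    pc (x ⊓ u) ≤ pc (y ⊓ v) := by
  apply (pc_iff _ _).mp
  have h1 : (x ⊓ u) ⊓ pc (x ⊓ u) = ⊥ := my_inf_pc _
  have h2 : u ⊓ (x ⊓ pc (x ⊓ u)) = ⊥ := by rw [← h1]; ac_rfl
  have h3 : x ⊓ pc (x ⊓ u) ≤ pc v := hu ▸ (pc_iff u _).mp h2
  have h4 : v ⊓ (x ⊓ pc (x ⊓ u)) = ⊥ := (pc_iff v _).mpr h3
  have h5 : x ⊓ (v ⊓ pc (x ⊓ u)) = ⊥ := by rw [← h4]; ac_rfl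
  have h6 : v ⊓ pc (x ⊓ u) ≤ pc y := hx ▸ (pc_iff x _).mp h5
  have h7 : y ⊓ (v ⊓ pc (x ⊓ u)) = ⊥ := (pc_iff y _).mpr h6
  rw [← h7]; ac_rfl

lemma my_pc_inf_congr {x y u v : L} (hx : pc x = pc y) (hu : pc u = pc v) :
    pc (x ⊓ u) = pc (y ⊓ v) :=
  le_antisymm (my_pc_inf_congr_le hx hu) (my_pc_inf_congr_le hx.symm hu.symm)

/-- The congruence determined by meeting with a dense element `e` and joining
with `dm e`. -/
def sigmaRel (e : L) : L → L → Prop := fun x y => x ⊓ e = y ⊓ e ∧ x ⊔ dm e = y ⊔ dm e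

lemma sigmaRel_cong {e : L} (he : pc e = ⊥) : IsCongruence (sigmaRel e) := by
  refine ⟨⟨fun x => ⟨rfl, rfl⟩, fun h => ⟨h.1.symm, h.2.symm⟩,
      fun h1 h2 => ⟨h1.1.trans h2.1, h1.2.trans h2.2⟩⟩, ?_, ?_, ?_, ?_⟩
  · rintro a b c d ⟨h1, h2⟩ ⟨h3, h4⟩
    constructor
    · rw [inf_inf_distrib_right, h1, h3, ← inf_inf_distrib_right]
    · rw [sup_inf_right, h2, h4, ← sup_inf_right]
  · rintro a b c d ⟨h1, h2⟩ ⟨h3, h4⟩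
    constructor
    · rw [inf_sup_right, h1, h3, ← inf_sup_right]
    · rw [sup_sup_distrib_right, h2, h4, ← sup_sup_distrib_right]
  · rintro a b ⟨h1, h2⟩
    constructor
    · have := congrArg dm h2
      rw [my_dm_sup, my_dm_sup, dm_dm] at this
      exact this
    · have := congrArg dm h1
      rw [dm_inf, dm_inf] at this
      exact this
  · rintro a b ⟨h1, h2⟩
    have hpc : pc a = pc b := by
      rw [← my_pc_inf_dense he a, ← my_pc_inf_dense he b, h1]
    exact ⟨by rw [hpc], by rw [hpc]⟩

/-- The congruence determined by the trace on `[m, dm m]` together with the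
Glivenko data. -/
def thetaRel (m : L) : L → L → Prop := fun x y =>
  (x ⊔ m) ⊓ dm m = (y ⊔ m) ⊓ dm m ∧ pc x = pc y ∧ pc (dm x) = pc (dm y)

lemma thetaRel_cong {m : L} (hm : m ≤ dm m) : IsCongruence (thetaRel m) := by
  have htr : ∀ x : L, (dm x ⊔ m) ⊓ dm m = dm ((x ⊔ m) ⊓ dm m) := by
    intro x
    rw [dm_inf, my_dm_sup, dm_dm, sup_inf_right, sup_eq_left.mpr hm]
  refine ⟨⟨fun x => ⟨rfl, rfl, rfl⟩, fun h => ⟨h.1.symm, h.2.1.symm, h.2.2.symm⟩,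
      fun h1 h2 => ⟨h1.1.trans h2.1, h1.2.1.trans h2.2.1, h1.2.2.trans h2.2.2⟩⟩, ?_, ?_, ?_, ?_⟩
  · rintro a b c d ⟨h1, h2, h3⟩ ⟨h4, h5, h6⟩
    refine ⟨?_, my_pc_inf_congr h2 h5, ?_⟩
    · rw [sup_inf_right, inf_inf_distrib_right, h1, h4,
        ← inf_inf_distrib_right, ← sup_inf_right]
    · rw [dm_inf, dm_inf, my_pc_sup, my_pc_sup, h3, h6]
  · rintro a b c d ⟨h1, h2, h3⟩ ⟨h4, h5, h6⟩
    refine ⟨?_, by rw [my_pc_sup, my_pc_sup, h2, h5], ?_⟩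
    · rw [sup_sup_distrib_right, inf_sup_right, h1, h4, ← inf_sup_right,
        ← sup_sup_distrib_right]
    · rw [my_dm_sup, my_dm_sup]
      exact my_pc_inf_congr h3 h6
  · rintro a b ⟨h1, h2, h3⟩
    refine ⟨?_, h3, ?_⟩
    · rw [htr, htr, h1]
    · rw [dm_dm, dm_dm]; exact h2
  · rintro a b ⟨h1, h2, h3⟩
    exact ⟨by rw [h2], by rw [h2], by rw [h2]⟩

lemma si_spec (hsi : SubdirectlyIrreducible L) :
    ∃ p q : L, p ≠ q ∧ ∀ θ : L → L → Prop, IsCongruence θ →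
      (∃ u v : L, u ≠ v ∧ θ u v) → θ p q := by
  obtain ⟨μ, hμc, hμne, hmin⟩ := hsi
  have hex : ∃ p q : L, p ≠ q ∧ μ p q := by
    by_contra h
    push_neg at h
    apply hμne
    funext a b
    apply propext
    constructor
    · intro hab
      by_contra hne
      exact h a b hne hab
    · rintro rfl
      exact hμc.1.refl a
  obtain ⟨p, q, hpq, hμpq⟩ := hex
  refine ⟨p, q, hpq, fun θ hθ hw => ?_⟩
  obtain ⟨u, v, huv, hθuv⟩ := hw
  refine hmin θ hθ (fun h => ?_) p q hμpq
  rw [h] at hθuv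
  exact huv hθuv

lemma cancel3 {L : Type*} [PMAlgebra L] {m p q : L}
    (e1 : p ⊓ m = q ⊓ m) (e2 : p ⊔ dm m = q ⊔ dm m)
    (e3 : (p ⊔ m) ⊓ dm m = (q ⊔ m) ⊓ dm m) : p = q := by
  have aux : ∀ x y : L, y ≤ x → x ⊓ m = y ⊓ m → x ⊔ dm m = y ⊔ dm m →
      (x ⊔ m) ⊓ dm m = (y ⊔ m) ⊓ dm m → x = y := by
    intro x y hyx h1 h2 h3
    have hx1 : x ≤ y ⊔ dm m := h2 ▸ le_sup_left
    have hx2 : x = y ⊔ (x ⊓ dm m) := by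
      conv_lhs => rw [← inf_eq_left.mpr hx1]
      rw [inf_sup_left, inf_eq_right.mpr hyx]
    have h4 : x ⊓ dm m ≤ y ⊔ m := by
      calc x ⊓ dm m ≤ (x ⊔ m) ⊓ dm m := inf_le_inf_right _ le_sup_left
      _ = (y ⊔ m) ⊓ dm m := h3
      _ ≤ y ⊔ m := inf_le_left
    have h5 : x ≤ y ⊔ m := by
      rw [hx2]
      exact sup_le le_sup_left h4
    have h6 : x = y ⊔ (x ⊓ m) := by
      conv_lhs => rw [← inf_eq_left.mpr h5]
      rw [inf_sup_left, inf_eq_right.mpr hyx]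
    rw [h6, h1, sup_eq_left.mpr inf_le_left]
  have i1 : p ⊓ m = (p ⊓ q) ⊓ m := by
    rw [inf_inf_distrib_right, ← e1, ← inf_inf_distrib_right, inf_idem]
  have i2 : p ⊔ dm m = (p ⊓ q) ⊔ dm m := by
    rw [sup_inf_right, ← e2, inf_idem]
  have i3 : (p ⊔ m) ⊓ dm m = ((p ⊓ q) ⊔ m) ⊓ dm m := by
    rw [sup_inf_right, inf_inf_distrib_right, ← e3, ← inf_inf_distrib_right, inf_idem]
  have j1 : q ⊓ m = (p ⊓ q) ⊓ m := by
    rw [inf_inf_distrib_right, e1, ← inf_inf_distrib_right, inf_idem]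
  have j2 : q ⊔ dm m = (p ⊓ q) ⊔ dm m := by
    rw [sup_inf_right, e2, inf_idem]
  have j3 : (q ⊔ m) ⊓ dm m = ((p ⊓ q) ⊔ m) ⊓ dm m := by
    rw [sup_inf_right, inf_inf_distrib_right, e3, ← inf_inf_distrib_right, inf_idem]
  have hp : p = p ⊓ q := aux p (p ⊓ q) inf_le_left i1 i2 i3
  have hq : q = p ⊓ q := aux q (p ⊓ q) inf_le_right j1 j2 j3
  exact hp.trans hq.symm

/-- Key lemma: every strictly-middle element of `[d, dm d]` is a De Morgan
fixed point. -/
lemma middle_fixed {L : Type*} [PMAlgebra L]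
    (hsi : SubdirectlyIrreducible L)
    (hid : ∀ a b : L, pc a ≤ C b ⊔ pc (T a))
    {d a : L} (hd : pc d = ⊥)
    (ha1 : d ≤ a) (ha2 : a ≤ dm d) (had : a ≠ d) (haD : a ≠ dm d) : dm a = a := by
  have hdD : d ≤ dm d := le_trans ha1 ha2
  -- basic density facts
  have hpa : pc a = ⊥ := le_bot_iff.mp (hd ▸ my_pc_le_pc ha1)
  have hda1 : d ≤ dm a := by
    have := my_dm_le_dm ha2
    rwa [dm_dm] at this
  have hda2 : dm a ≤ dm d := my_dm_le_dm ha1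
  have hpda : pc (dm a) = ⊥ := le_bot_iff.mp (hd ▸ my_pc_le_pc hda1)
  -- pc (dm d) = ⊥, via hid
  have hpD : pc (dm d) = ⊥ := by
    have hC : C (dm d) = d := by
      unfold C
      rw [dm_dm, inf_eq_right.mpr hdD, hd, sup_bot_eq]
    have hT : T (dm d) = d := by
      unfold T
      rw [hC, inf_eq_left.mpr hdD]
    have h1 : pc (dm d) ≤ d := by
      have := hid (dm d) (dm d)
      rwa [hC, hT, hd, sup_bot_eq] at this
    have h2 : pc (dm d) ≤ dm d := le_trans h1 hdD
    have h3 : dm d ⊓ pc (dm d) = ⊥ := my_inf_pc _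
    rw [inf_eq_right.mpr h2] at h3
    exact h3
  -- the midpoint m = a ⊓ dm a and its dual
  have hdmm : dm (a ⊓ dm a) = a ⊔ dm a := by
    rw [dm_inf, dm_dm, sup_comm]
  have hmle : a ⊓ dm a ≤ dm (a ⊓ dm a) := by
    rw [hdmm]; exact le_trans inf_le_left le_sup_left
  have hdm : d ≤ a ⊓ dm a := le_inf ha1 hda1
  have hpm : pc (a ⊓ dm a) = ⊥ := le_bot_iff.mp (hd ▸ my_pc_le_pc hdm)
  have hpdm : pc (dm (a ⊓ dm a)) = ⊥ :=
    le_bot_iff.mp (hd ▸ my_pc_le_pc (le_trans hdm hmle))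
  by_contra hne
  have hmne : a ⊓ dm a ≠ dm (a ⊓ dm a) := by
    intro h
    apply hne
    have h1 : a ≤ a ⊓ dm a := h ▸ (hdmm ▸ le_sup_left : a ≤ dm (a ⊓ dm a))
    have h2 : dm a ≤ a ⊓ dm a := h ▸ (hdmm ▸ le_sup_right : dm a ≤ dm (a ⊓ dm a))
    have h3 : a = a ⊓ dm a := le_antisymm h1 inf_le_left
    have h4 : dm a = a ⊓ dm a := le_antisymm h2 inf_le_right
    rw [← h4] at h3
    rw [h3, dm_dm]
    exact h3
  obtain ⟨p, q, hpq, hmono⟩ := si_spec hsi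
  by_cases hcase : a ⊓ dm a = a ∨ a ⊓ dm a = dm a
  · -- comparable case: use sigmaRel (a ⊓ dm a) and thetaRel (a ⊓ dm a)
    have hmd : a ⊓ dm a ≠ d := by
      rcases hcase with h | h
      · rw [h]; exact had
      · rw [h]; intro h2
        apply haD
        have := congrArg dm h2
        rwa [dm_dm] at this
    have hσw : ∃ u v : L, u ≠ v ∧ sigmaRel (a ⊓ dm a) u v := by
      refine ⟨a ⊓ dm a, dm (a ⊓ dm a), hmne, ?_, ?_⟩
      · rw [inf_idem]
        exact (inf_eq_right.mpr hmle).symm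
      · rw [sup_idem]
        exact sup_eq_right.mpr hmle
    by_cases hθw : ∃ u v : L, u ≠ v ∧ thetaRel (a ⊓ dm a) u v
    · obtain ⟨e1, e2⟩ := hmono (sigmaRel (a ⊓ dm a)) (sigmaRel_cong hpm) hσw
      obtain ⟨e3, -, -⟩ := hmono (thetaRel (a ⊓ dm a)) (thetaRel_cong hmle) hθw
      exact hpq (cancel3 e1 e2 e3)
    · -- thetaRel (a ⊓ dm a) is trivial; but it relates d and a ⊓ dm a
      push_neg at hθw
      exact hθw (a ⊓ dm a) d hmd
        ⟨by rw [sup_idem, sup_eq_right.mpr hdm], by rw [hpm, hd], by rw [hpdm, hpD]⟩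
  · -- incomparable case: use sigmaRel a and sigmaRel (dm a)
    push_neg at hcase
    obtain ⟨hca, hcda⟩ := hcase
    have hw1 : ∃ u v : L, u ≠ v ∧ sigmaRel a u v := by
      refine ⟨a ⊓ dm a, dm a, hcda, ?_, ?_⟩
      · rw [inf_comm (dm a) a]
        exact inf_eq_left.mpr inf_le_left
      · rw [sup_idem]
        exact sup_eq_right.mpr inf_le_right
    have hw2 : ∃ u v : L, u ≠ v ∧ sigmaRel (dm a) u v := by
      refine ⟨a ⊓ dm a, a, hca, ?_, ?_⟩
      · exact inf_eq_left.mpr inf_le_right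
      · rw [dm_dm, sup_idem]
        exact sup_eq_right.mpr inf_le_left
    obtain ⟨e1, e2⟩ := hmono (sigmaRel a) (sigmaRel_cong hpa) hw1
    obtain ⟨e3, e4⟩ := hmono (sigmaRel (dm a)) (sigmaRel_cong hpda) hw2
    rw [dm_dm] at e4
    exact hpq (eq_of_inf_eq_sup_eq e1 e4)

end Aux

/-- In a subdirectly irreducible pk-algebra satisfying `a* ≤ C(b) ∨ T(a)*` with
least dense element `d`, the interval `[d, d']` has at most three elements. -/
theorem interval_encard_le_three {L : Type*} [PMAlgebra L]
    (hk : Kleene L) (hsi : SubdirectlyIrreducible L)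
    (hid : ∀ a b : L, pc a ≤ C b ⊔ pc (T a))
    (d : L) (hd : pc d = ⊥) (hleast : ∀ e : L, pc e = ⊥ → d ≤ e) :
    {a : L | d ≤ a ∧ a ≤ dm d}.encard ≤ 3 := by
  have key : ∀ a : L, d ≤ a → a ≤ dm d → a ≠ d → a ≠ dm d → dm a = a :=
    fun a h1 h2 h3 h4 => middle_fixed hsi hid hd h1 h2 h3 h4
  obtain ⟨c, hc⟩ : ∃ c : L, {a : L | d ≤ a ∧ a ≤ dm d} ⊆ {d, dm d, c} := by
    by_cases hmid : ∃ a : L, (d ≤ a ∧ a ≤ dm d) ∧ a ≠ d ∧ a ≠ dm d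
    · obtain ⟨a, ⟨ha1, ha2⟩, had, haD⟩ := hmid
      have haf : dm a = a := key a ha1 ha2 had haD
      refine ⟨a, fun x hx => ?_⟩
      obtain ⟨hx1, hx2⟩ := hx
      by_cases h1 : x = d
      · exact Or.inl h1
      by_cases h2 : x = dm d
      · exact Or.inr (Or.inl h2)
      right; right
      have hxf : dm x = x := key x hx1 hx2 h1 h2
      have hk1 := hk x a
      have hk2 := hk a x
      rw [hxf, haf, inf_idem, sup_idem] at hk1 hk2
      exact le_antisymm hk1 hk2
    · push_neg at hmid
      refine ⟨d, fun x hx => ?_⟩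
      by_cases h1 : x = d
      · exact Or.inl h1
      · exact Or.inr (Or.inl (hmid x hx h1))
  calc {a : L | d ≤ a ∧ a ≤ dm d}.encard ≤ ({d, dm d, c} : Set L).encard :=
        Set.encard_mono hc
    _ ≤ ({dm d, c} : Set L).encard + 1 := Set.encard_insert_le _ _
    _ ≤ (({c} : Set L).encard + 1) + 1 := add_le_add (Set.encard_insert_le _ _) le_rfl
    _ ≤ 3 := by rw [Set.encard_singleton]; norm_num
end
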